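/- arXiv:quant-ph/0604174 — 4 statements merged into one kernel-verified Lean document; each statement's English description precedes it below -/
import Mathlib

section
/- For any two subgroups H and H' of a finite group G, the trace of the product of their coset states satisfies tr(ρ_H ρ_{H'}) = |H ∩ H'| / |G|. -/
noncomputable section

open scoped BigOperators ComplexOrder

open Classical in
/-- The coset state `ρ_H = (1/|G|) ∑_g |gH⟩⟨gH|`; its `(x, y)` entry is
`1/|G|` if `x⁻¹ y ∈ H` and `0` otherwise. -/
def cosetState {G : Type*} [Group G] [Fintype G] (H : Subgroup G) : Matrix G G ℂ :=
  fun x y => if x⁻¹ * y ∈ H then (1 : ℂ) / (Fintype.card G) else 0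

/-- `k`-fold tensor power of a matrix. -/
def tensorPow {n : Type*} [Fintype n] (M : Matrix n n ℂ) (k : ℕ) :
    Matrix (Fin k → n) (Fin k → n) ℂ :=
  fun x y => ∏ i, M (x i) (y i)

/-- Trace norm `‖Y‖₁ = tr √(Yᴴ Y)`. -/
def traceNorm {n : Type*} [Fintype n] [DecidableEq n] (Y : Matrix n n ℂ) : ℝ :=
  (((Matrix.posSemidef_conjTranspose_mul_self Y).1.eigenvectorUnitary.1 *
      Matrix.diagonal (((↑) : ℝ → ℂ) ∘ (Real.sqrt ·) ∘ (Matrix.posSemidef_conjTranspose_mul_self Y).1.eigenvalues) *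
      (star (Matrix.posSemidef_conjTranspose_mul_self Y).1.eigenvectorUnitary : Matrix n n ℂ)).trace).re

/-- Operator (spectral) norm of a matrix. -/
def opNorm {n : Type*} [Fintype n] [DecidableEq n] (M : Matrix n n ℂ) : ℝ :=
  ‖Matrix.toEuclideanCLM (𝕜 := ℂ) M‖

/-- Square root of the Moore–Penrose pseudoinverse of a Hermitian matrix
(junk value `0` on non-Hermitian input). -/
def pinvSqrt {n : Type*} [Fintype n] [DecidableEq n] (A : Matrix n n ℂ) : Matrix n n ℂ :=
  if h : A.IsHermitian then
    h.eigenvectorUnitary.1 *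
      Matrix.diagonal (fun i => ((Real.sqrt (h.eigenvalues i))⁻¹ : ℂ)) *
      (star h.eigenvectorUnitary : Matrix n n ℂ)
  else 0

/-- tr(ρ_H ρ_{H'}) = |H ∩ H'|/|G|. -/
theorem trace_cosetState_mul_cosetState {G : Type*} [Group G] [Fintype G] [DecidableEq G]
    (H H' : Subgroup G) :
    (cosetState H * cosetState H').trace =
      (Nat.card ↥(H ⊓ H') : ℂ) / (Fintype.card G : ℂ) := by
  classical
  have hc : (Fintype.card G : ℂ) ≠ 0 := Nat.cast_ne_zero.mpr Fintype.card_ne_zero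
  have key : ∀ x : G, (∑ y : G, cosetState H x y * cosetState H' y x)
      = (Nat.card ↥(H ⊓ H') : ℂ) / ((Fintype.card G : ℂ) * (Fintype.card G : ℂ)) := by
    intro x
    have h1 : ∀ y : G, cosetState H x y * cosetState H' y x =
        (if x⁻¹ * y ∈ H ⊓ H' then (1 : ℂ) / ((Fintype.card G : ℂ) * (Fintype.card G : ℂ)) else 0) := by
      intro y
      simp only [cosetState, Subgroup.mem_inf, ite_mul, mul_ite, zero_mul, mul_zero]
      have : y⁻¹ * x ∈ H' ↔ x⁻¹ * y ∈ H' := by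
        constructor <;> intro h <;> simpa using H'.inv_mem h
      by_cases hH : x⁻¹ * y ∈ H <;> by_cases hH' : x⁻¹ * y ∈ H' <;>
        simp [hH, hH', this, div_mul_div_comm]
    simp only [h1]
    rw [← Finset.sum_filter, Finset.sum_const, nsmul_eq_mul]
    have hcard : (Finset.univ.filter (fun y : G => x⁻¹ * y ∈ H ⊓ H')).card
        = Nat.card ↥(H ⊓ H') := by
      rw [Nat.card_eq_fintype_card, ← Fintype.card_subtype]
      exact Fintype.card_congr
        ⟨fun y => ⟨x⁻¹ * y.1, y.2⟩, fun h => ⟨x * h.1, by simp [h.2]⟩,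
         fun y => by simp, fun h => by simp⟩
    rw [hcard]
    ring
  simp only [Matrix.trace, Matrix.diag, Matrix.mul_apply]
  rw [Finset.sum_congr rfl (fun x _ => key x), Finset.sum_const, nsmul_eq_mul]
  field_simp
  rw [Finset.card_univ]
  ring
end
end

section
/- Let 𝓗 be a finite set of subgroups of a finite group G such that any two distinct subgroups H, H' ∈ 𝓗 intersect trivially (|H ∩ H'| = 1). Then for any positive integer k, the trace norm ‖(1/|𝓗|) Σ_{H∈𝓗} ρ_H^{⊗k} − (I/|G|)^{⊗k}‖₁ ≤ √( (max_{H∈𝓗} |H|)^k / |𝓗| ). -/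
noncomputable section

open scoped BigOperators ComplexOrder

open Matrix in
lemma trace_conjTranspose_mul_re' {n : Type*} [Fintype n] [DecidableEq n] (B : Matrix n n ℂ) :
    ((Bᴴ * B).trace).re = ∑ i, ∑ j, Complex.normSq (B j i) := by
  simp only [Matrix.trace, Matrix.diag, Matrix.mul_apply, Matrix.conjTranspose_apply,
    Complex.re_sum]
  congr 1; ext i; congr 1; ext j
  rw [Complex.normSq_apply]
  simp [Complex.mul_re]

open Matrix in
set_option maxHeartbeats 1000000 in
lemma traceNorm_le_sqrt_card_mul {n : Type*} [Fintype n] [DecidableEq n] (Y : Matrix n n ℂ) :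
    traceNorm Y ≤ Real.sqrt ((Fintype.card n : ℝ) * ((Yᴴ * Y).trace).re) := by
  obtain ⟨B, hB, hBB⟩ : ∃ B : Matrix n n ℂ, B.PosSemidef ∧ B * B = Yᴴ * Y ∧
      traceNorm Y = (B.trace).re :=
    by
      set hP := Matrix.posSemidef_conjTranspose_mul_self Y
      set U := hP.1.eigenvectorUnitary
      have hUU : (star U : Matrix n n ℂ) * U.1 = 1 := Unitary.star_mul_self_of_mem U.2
      refine ⟨U.1 * Matrix.diagonal (((↑) : ℝ → ℂ) ∘ (Real.sqrt ·) ∘ hP.1.eigenvalues) *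
        (star U : Matrix n n ℂ), ?_, ?_, rfl⟩
      · have := (Matrix.posSemidef_diagonal_iff.mpr (fun i => by
          simp [Real.sqrt_nonneg] : ∀ i, (0:ℂ) ≤ (((↑) : ℝ → ℂ) ∘ (Real.sqrt ·) ∘
            hP.1.eigenvalues) i)).mul_mul_conjTranspose_same U.1
        simpa [Matrix.star_eq_conjTranspose] using this
      · have hspec := hP.1.spectral_theorem
        have hD : Matrix.diagonal (((↑) : ℝ → ℂ) ∘ (Real.sqrt ·) ∘ hP.1.eigenvalues) *
            Matrix.diagonal (((↑) : ℝ → ℂ) ∘ (Real.sqrt ·) ∘ hP.1.eigenvalues) =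
            Matrix.diagonal (RCLike.ofReal ∘ hP.1.eigenvalues) := by
          rw [Matrix.diagonal_mul_diagonal]
          congr 1; funext i
          simp only [Function.comp]
          rw [← Complex.ofReal_mul, Real.mul_self_sqrt (hP.eigenvalues_nonneg i)]
          rfl
        rw [Unitary.conjStarAlgAut_apply, ← hD] at hspec
        refine Eq.trans ?_ hspec.symm
        simp only [Matrix.mul_assoc]
        rw [← Matrix.mul_assoc (star U : Matrix n n ℂ), hUU, Matrix.one_mul]
  obtain ⟨hBB, htr⟩ := hBB
  have hdiag : ∀ i, 0 ≤ (B i i).re := by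
    intro i
    exact (Complex.le_def.mp hB.diag_nonneg).1
  have h1 : traceNorm Y = ∑ i, (B i i).re := by
    rw [htr]; simp [Matrix.trace, Matrix.diag, Complex.re_sum]
  have h2 : (∑ i, (B i i).re) ^ 2 ≤ (Fintype.card n : ℝ) * ∑ i, (B i i).re ^ 2 := by
    simpa using sq_sum_le_card_mul_sum_sq (s := Finset.univ) (f := fun i => (B i i).re)
  have h3 : ∑ i, (B i i).re ^ 2 ≤ ((Yᴴ * Y).trace).re := by
    have heq : Bᴴ * B = Yᴴ * Y := by rw [hB.1, hBB]
    rw [← heq, trace_conjTranspose_mul_re']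
    apply Finset.sum_le_sum
    intro i _
    calc (B i i).re ^ 2 ≤ Complex.normSq (B i i) := by
          rw [Complex.normSq_apply]; nlinarith [sq_nonneg (B i i).im]
      _ ≤ ∑ j, Complex.normSq (B j i) :=
          Finset.single_le_sum (f := fun j => Complex.normSq (B j i))
            (fun j _ => Complex.normSq_nonneg _) (Finset.mem_univ i)
  have hnn : 0 ≤ ∑ i, (B i i).re := Finset.sum_nonneg fun i _ => hdiag i
  have hy : 0 ≤ (Fintype.card n : ℝ) * ((Yᴴ * Y).trace).re :=
    mul_nonneg (Nat.cast_nonneg _)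
      (le_trans (Finset.sum_nonneg fun i _ => sq_nonneg _) h3)
  rw [h1, Real.le_sqrt hnn]
  · calc (∑ i, (B i i).re) ^ 2 ≤ (Fintype.card n : ℝ) * ∑ i, (B i i).re ^ 2 := h2
      _ ≤ (Fintype.card n : ℝ) * ((Yᴴ * Y).trace).re :=
          mul_le_mul_of_nonneg_left h3 (by positivity)
  · exact hy

/-- Frobenius-type bilinear pairing without conjugation. -/
def Jp {α : Type*} [Fintype α] (M N : Matrix α α ℂ) : ℂ := ∑ x, ∑ y, M x y * N x y

lemma Jp_comm {α : Type*} [Fintype α] (M N : Matrix α α ℂ) : Jp M N = Jp N M := by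
  unfold Jp; congr 1; ext x; congr 1; ext y; ring

lemma Jp_sub_left {α : Type*} [Fintype α] (A B C : Matrix α α ℂ) :
    Jp (A - B) C = Jp A C - Jp B C := by
  simp [Jp, sub_mul, Finset.sum_sub_distrib]

lemma Jp_smul_left {α : Type*} [Fintype α] (c : ℂ) (A C : Matrix α α ℂ) :
    Jp (c • A) C = c * Jp A C := by
  simp [Jp, Finset.mul_sum, mul_assoc]

lemma Jp_sum_left {α β : Type*} [Fintype α] (s : Finset β) (A : β → Matrix α α ℂ)
    (C : Matrix α α ℂ) : Jp (∑ H ∈ s, A H) C = ∑ H ∈ s, Jp (A H) C := by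
  simp only [Jp, Matrix.sum_apply, Finset.sum_mul]
  rw [show (∑ x : α, ∑ y : α, ∑ H ∈ s, A H x y * C x y)
      = ∑ x : α, ∑ H ∈ s, ∑ y : α, A H x y * C x y from
    Finset.sum_congr rfl fun x _ => Finset.sum_comm]
  exact Finset.sum_comm

lemma Jp_sub_right {α : Type*} [Fintype α] (C A B : Matrix α α ℂ) :
    Jp C (A - B) = Jp C A - Jp C B := by
  rw [Jp_comm, Jp_sub_left, Jp_comm A C, Jp_comm B C]

lemma Jp_smul_right {α : Type*} [Fintype α] (c : ℂ) (C A : Matrix α α ℂ) :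
    Jp C (c • A) = c * Jp C A := by
  rw [Jp_comm, Jp_smul_left, Jp_comm A C]

lemma Jp_sum_right {α β : Type*} [Fintype α] (s : Finset β) (A : β → Matrix α α ℂ)
    (C : Matrix α α ℂ) : Jp C (∑ H ∈ s, A H) = ∑ H ∈ s, Jp C (A H) := by
  rw [Jp_comm, Jp_sum_left]
  exact Finset.sum_congr rfl fun H _ => Jp_comm _ _

lemma sum_pi_prod {k : ℕ} {G : Type*} [Fintype G] (h : Fin k → G → ℂ) :
    ∑ y : Fin k → G, ∏ i, h i (y i) = ∏ i, ∑ b, h i b := by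
  classical
  rw [Finset.prod_univ_sum, Fintype.piFinset_univ]

lemma Jp_tensorPow {G : Type*} [Fintype G] (M N : Matrix G G ℂ) (k : ℕ) :
    Jp (tensorPow M k) (tensorPow N k) = (Jp M N) ^ k := by
  classical
  unfold Jp tensorPow
  calc ∑ x : Fin k → G, ∑ y : Fin k → G, (∏ i, M (x i) (y i)) * ∏ i, N (x i) (y i)
      = ∑ x : Fin k → G, ∑ y : Fin k → G, ∏ i, (M (x i) (y i) * N (x i) (y i)) := by
        simp [Finset.prod_mul_distrib]
    _ = ∑ x : Fin k → G, ∏ i, ∑ b, (M (x i) b * N (x i) b) := by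
        refine Finset.sum_congr rfl fun x _ => ?_
        exact sum_pi_prod (fun i b => M (x i) b * N (x i) b)
    _ = ∏ _i : Fin k, ∑ a, ∑ b, M a b * N a b :=
        sum_pi_prod (fun _ a => ∑ b, M a b * N a b)
    _ = (∑ a, ∑ b, M a b * N a b) ^ k := by
        rw [Finset.prod_const, Finset.card_univ, Fintype.card_fin]

open Classical in
lemma sum_ite_mem_subgroup {G : Type*} [Group G] [Fintype G] (K : Subgroup G) (z : ℂ) (a : G) :
    ∑ b : G, (if a⁻¹ * b ∈ K then z else 0) = (Nat.card ↥K : ℂ) * z := by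
  classical
  rw [Fintype.sum_equiv (Equiv.mulLeft a⁻¹) _ (fun c => if c ∈ K then z else 0)
    (by intro c; simp; congr)]
  rw [← Finset.sum_filter, Finset.sum_const, Nat.card_eq_fintype_card,
    Fintype.card_subtype]
  simp [mul_comm]

lemma Jp_cosetState {G : Type*} [Group G] [Fintype G] (K K' : Subgroup G) :
    Jp (cosetState K) (cosetState K') =
      (Nat.card ↥(K ⊓ K') : ℂ) / (Fintype.card G : ℂ) := by
  classical
  have hd : ((Fintype.card G : ℂ)) ≠ 0 := by
    simpa using Nat.cast_ne_zero.mpr Fintype.card_ne_zero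
  unfold Jp cosetState
  have hterm : ∀ a b : G, (if a⁻¹ * b ∈ K then (1:ℂ)/(Fintype.card G) else 0) *
      (if a⁻¹ * b ∈ K' then (1:ℂ)/(Fintype.card G) else 0) =
      (if a⁻¹ * b ∈ K ⊓ K' then (1:ℂ)/(Fintype.card G)^2 else 0) := by
    intro a b
    by_cases h1 : a⁻¹ * b ∈ K <;> by_cases h2 : a⁻¹ * b ∈ K' <;>
      simp [h1, h2, Subgroup.mem_inf, div_mul_div_comm, sq]
  simp only [hterm]
  rw [Finset.sum_congr rfl fun a _ =>
    sum_ite_mem_subgroup (K ⊓ K') ((1:ℂ)/(Fintype.card G)^2) a]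
  rw [Finset.sum_const, Finset.card_univ]
  field_simp
  rw [nsmul_eq_mul]; field_simp

lemma Jp_cosetState_one {G : Type*} [Group G] [Fintype G] [DecidableEq G] (K : Subgroup G) :
    Jp (cosetState K) ((1 / (Fintype.card G : ℂ)) • (1 : Matrix G G ℂ)) =
      1 / (Fintype.card G : ℂ) := by
  classical
  have hd : ((Fintype.card G : ℂ)) ≠ 0 := by
    simpa using Nat.cast_ne_zero.mpr Fintype.card_ne_zero
  unfold Jp
  have hterm : ∀ a : G, ∑ b : G, cosetState K a b *
      (((1 / (Fintype.card G : ℂ)) • (1 : Matrix G G ℂ)) a b) =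
      (1:ℂ)/(Fintype.card G)^2 := by
    intro a
    rw [Finset.sum_eq_single a]
    · simp [cosetState, Matrix.smul_apply, Matrix.one_apply, one_mem, sq]
    · intro b _ hb
      simp [Matrix.smul_apply, Matrix.one_apply, Ne.symm hb]
    · simp
  simp only [hterm]
  rw [Finset.sum_const, Finset.card_univ]
  field_simp
  rw [nsmul_eq_mul]; field_simp

lemma Jp_one_one {G : Type*} [Group G] [Fintype G] [DecidableEq G] :
    Jp ((1 / (Fintype.card G : ℂ)) • (1 : Matrix G G ℂ))
       ((1 / (Fintype.card G : ℂ)) • (1 : Matrix G G ℂ)) = 1 / (Fintype.card G : ℂ) := by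
  classical
  have hd : ((Fintype.card G : ℂ)) ≠ 0 := by
    simpa using Nat.cast_ne_zero.mpr Fintype.card_ne_zero
  unfold Jp
  have hterm : ∀ a : G, ∑ b : G, (((1 / (Fintype.card G : ℂ)) • (1 : Matrix G G ℂ)) a b) *
      (((1 / (Fintype.card G : ℂ)) • (1 : Matrix G G ℂ)) a b) = (1:ℂ)/(Fintype.card G)^2 := by
    intro a
    rw [Finset.sum_eq_single a]
    · simp [Matrix.smul_apply, Matrix.one_apply, sq]
    · intro b _ hb
      simp [Matrix.smul_apply, Matrix.one_apply, Ne.symm hb]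
    · simp
  simp only [hterm]
  rw [Finset.sum_const, Finset.card_univ]
  field_simp
  rw [nsmul_eq_mul]; field_simp

lemma star_cosetState {G : Type*} [Group G] [Fintype G] (H : Subgroup G) (a b : G) :
    star (cosetState H a b) = cosetState H a b := by
  unfold cosetState; split <;> simp

open Matrix in
/-- Trace-norm bound for TCS with pairwise trivially intersecting subgroups. -/
theorem tcs_traceNorm_bound {G : Type*} [Group G] [Fintype G] [DecidableEq G]
    (𝓗 : Finset (Subgroup G)) (h𝓗 : 𝓗.Nonempty)
    (htriv : ∀ H ∈ 𝓗, ∀ H' ∈ 𝓗, H ≠ H' → Nat.card ↥(H ⊓ H') = 1)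
    (k : ℕ) (hk : 0 < k) :
    traceNorm ((1 / (𝓗.card : ℂ)) • ∑ H ∈ 𝓗, tensorPow (cosetState H) k -
        tensorPow ((1 / (Fintype.card G : ℂ)) • (1 : Matrix G G ℂ)) k) ≤
      Real.sqrt (((𝓗.sup fun H => Nat.card ↥H : ℕ) : ℝ) ^ k / (𝓗.card : ℝ)) := by
  classical
  set d := Fintype.card G with hd
  set m := 𝓗.card with hm
  have hm0 : 0 < m := Finset.card_pos.mpr h𝓗
  have hd0 : 0 < d := Fintype.card_pos
  have hdC : ((d:ℂ)) ≠ 0 := Nat.cast_ne_zero.mpr hd0.ne'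
  have hmC : ((m:ℂ)) ≠ 0 := Nat.cast_ne_zero.mpr hm0.ne'
  set S : Matrix (Fin k → G) (Fin k → G) ℂ :=
    tensorPow ((1 / (d : ℂ)) • (1 : Matrix G G ℂ)) k with hS
  set Δ : Matrix (Fin k → G) (Fin k → G) ℂ :=
    (1 / (m : ℂ)) • ∑ H ∈ 𝓗, tensorPow (cosetState H) k - S with hΔdef
  have hstarS : ∀ a b : G, star (((1/(d:ℂ)) • (1 : Matrix G G ℂ)) a b)
      = ((1/(d:ℂ)) • (1 : Matrix G G ℂ)) a b := by
    intro a b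
    simp only [Matrix.smul_apply, Matrix.one_apply, smul_eq_mul]
    split <;> simp
  have hstarT : ∀ (M : Matrix G G ℂ), (∀ a b, star (M a b) = M a b) →
      ∀ x y : Fin k → G, star (tensorPow M k x y) = tensorPow M k x y := by
    intro M hM x y
    unfold tensorPow
    rw [star_prod]
    exact Finset.prod_congr rfl fun i _ => hM _ _
  have hstar : ∀ x y, star (Δ x y) = Δ x y := by
    intro x y
    rw [hΔdef]
    simp only [Matrix.sub_apply, Matrix.smul_apply, Matrix.sum_apply, smul_eq_mul,
      star_sub, star_mul', star_sum]
    rw [hstarT _ hstarS, star_div₀, star_one, star_natCast]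
    congr 1
    refine congrArg _ (Finset.sum_congr rfl fun H _ => ?_)
    exact hstarT _ (star_cosetState H) x y
  have htr : (Δᴴ * Δ).trace = Jp Δ Δ := by
    unfold Jp
    simp only [Matrix.trace, Matrix.diag, Matrix.mul_apply, Matrix.conjTranspose_apply]
    rw [Finset.sum_comm]
    exact Finset.sum_congr rfl fun x _ => Finset.sum_congr rfl fun y _ => by rw [hstar]
  have hexp : Jp Δ Δ = (1/(m:ℂ))^2 * (∑ H ∈ 𝓗, ∑ H' ∈ 𝓗,
        Jp (tensorPow (cosetState H) k) (tensorPow (cosetState H') k))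
      - 2 * (1/(m:ℂ)) * (∑ H ∈ 𝓗, Jp (tensorPow (cosetState H) k) S) + Jp S S := by
    rw [hΔdef]
    simp only [Jp_sub_left, Jp_sub_right, Jp_smul_left, Jp_smul_right, Jp_sum_left,
      Jp_sum_right, Finset.sum_sub_distrib, ← Finset.mul_sum]
    rw [show (∑ H ∈ 𝓗, Jp S (tensorPow (cosetState H) k))
        = ∑ H ∈ 𝓗, Jp (tensorPow (cosetState H) k) S from
      Finset.sum_congr rfl fun H _ => Jp_comm _ _]
    rw [show (∑ H ∈ 𝓗, ∑ H' ∈ 𝓗,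
          Jp (tensorPow (cosetState H) k) (tensorPow (cosetState H') k))
        = ∑ H ∈ 𝓗, ∑ H' ∈ 𝓗,
          Jp (tensorPow (cosetState H') k) (tensorPow (cosetState H) k) from
      Finset.sum_comm]
    ring
  have hTT : ∀ H ∈ 𝓗, (∑ H' ∈ 𝓗,
        Jp (tensorPow (cosetState H) k) (tensorPow (cosetState H') k))
      = ((Nat.card ↥H : ℂ)/(d:ℂ))^k + ((m:ℂ) - 1) * ((1:ℂ)/(d:ℂ))^k := by
    intro H hH
    have hv : ∀ H' ∈ 𝓗, Jp (tensorPow (cosetState H) k) (tensorPow (cosetState H') k)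
        = ((Nat.card ↥(H ⊓ H') : ℂ)/(d:ℂ))^k := by
      intro H' _
      rw [Jp_tensorPow, Jp_cosetState]
    rw [Finset.sum_congr rfl hv, ← Finset.add_sum_erase _ _ hH, inf_idem]
    have hv2 : ∀ H' ∈ 𝓗.erase H, ((Nat.card ↥(H ⊓ H') : ℂ)/(d:ℂ))^k = ((1:ℂ)/(d:ℂ))^k := by
      intro H' hH'
      rw [htriv H hH H' (Finset.mem_of_mem_erase hH') (Finset.ne_of_mem_erase hH').symm]
      norm_num
    rw [Finset.sum_congr rfl hv2, Finset.sum_const, Finset.card_erase_of_mem hH,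
      nsmul_eq_mul, Nat.cast_sub hm0]
    push_cast
    ring
  have hTS : ∀ H ∈ 𝓗, Jp (tensorPow (cosetState H) k) S = ((1:ℂ)/(d:ℂ))^k := by
    intro H _
    rw [hS, Jp_tensorPow, Jp_cosetState_one]
  have hSS : Jp S S = ((1:ℂ)/(d:ℂ))^k := by
    rw [hS, Jp_tensorPow, Jp_one_one]
  have hval : (Δᴴ * Δ).trace =
      (((∑ H ∈ 𝓗, (((Nat.card ↥H : ℝ))^k - 1)) / ((m:ℝ)^2 * (d:ℝ)^k) : ℝ) : ℂ) := by
    rw [htr, hexp, Finset.sum_congr rfl hTT, Finset.sum_congr rfl hTS, hSS,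
      Finset.sum_add_distrib, Finset.sum_const, Finset.sum_const]
    rw [show (((∑ H ∈ 𝓗, (((Nat.card ↥H : ℝ))^k - 1)) / ((m:ℝ)^2 * (d:ℝ)^k) : ℝ) : ℂ)
        = ((∑ H ∈ 𝓗, ((Nat.card ↥H : ℂ))^k) - (m:ℂ)) / ((m:ℂ)^2 * (d:ℂ)^k) from by
      push_cast [Finset.sum_sub_distrib, Finset.sum_const, nsmul_eq_mul]
      ring]
    simp only [div_pow, one_pow, nsmul_eq_mul, ← Finset.sum_div]
    field_simp
    ring
  have hre : ((Δᴴ * Δ).trace).re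
      = (∑ H ∈ 𝓗, (((Nat.card ↥H : ℝ))^k - 1)) / ((m:ℝ)^2 * (d:ℝ)^k) := by
    rw [hval, Complex.ofReal_re]
  refine le_trans (traceNorm_le_sqrt_card_mul Δ) (Real.sqrt_le_sqrt ?_)
  rw [hre]
  have hcard : (Fintype.card (Fin k → G) : ℝ) = (d:ℝ)^k := by
    rw [Fintype.card_fun, Fintype.card_fin]
    push_cast
    rfl
  rw [hcard]
  have hsup : ∀ H ∈ 𝓗, (((Nat.card ↥H : ℝ))^k - 1)
      ≤ (((𝓗.sup fun H => Nat.card ↥H : ℕ)):ℝ)^k := by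
    intro H hH
    have h1 : (Nat.card ↥H : ℝ) ≤ ((𝓗.sup fun H => Nat.card ↥H : ℕ):ℝ) :=
      Nat.cast_le.mpr (Finset.le_sup (f := fun (H : Subgroup G) => Nat.card ↥H) hH)
    have h2 := pow_le_pow_left₀ (by positivity) h1 k
    linarith
  have hbound : ∑ H ∈ 𝓗, (((Nat.card ↥H : ℝ))^k - 1)
      ≤ (m:ℝ) * (((𝓗.sup fun H => Nat.card ↥H : ℕ)):ℝ)^k := by
    calc ∑ H ∈ 𝓗, (((Nat.card ↥H : ℝ))^k - 1)
        ≤ ∑ _H ∈ 𝓗, (((𝓗.sup fun H => Nat.card ↥H : ℕ)):ℝ)^k := Finset.sum_le_sum hsup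
      _ = (m:ℝ) * _ := by rw [Finset.sum_const, nsmul_eq_mul, hm]
  have hmR : (0:ℝ) < m := Nat.cast_pos.mpr hm0
  have hdR : (0:ℝ) < (d:ℝ)^k := by positivity
  rw [show (d:ℝ)^k * ((∑ H ∈ 𝓗, (((Nat.card ↥H : ℝ))^k - 1)) / ((m:ℝ)^2 * (d:ℝ)^k))
      = (∑ H ∈ 𝓗, (((Nat.card ↥H : ℝ))^k - 1)) / (m:ℝ)^2 from by field_simp]
  rw [div_le_div_iff₀ (by positivity) hmR]
  nlinarith [hbound, hmR]
end
end

section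
/- For any two density matrices ρ₀ and ρ₁ on ℂ^d, the maximum over two-outcome POVMs {M₀, M₁} of the average success probability (1/2)(tr(M₀ρ₀) + tr(M₁ρ₁)) equals 1/2 + (1/4)‖ρ₀ − ρ₁‖₁. -/
noncomputable section

open scoped BigOperators ComplexOrder

open Matrix

variable {n : Type*} [Fintype n] [DecidableEq n]

lemma diag_re_nonneg {P : Matrix n n ℂ} (hP : P.PosSemidef) (i : n) : 0 ≤ (P i i).re := by
  have := hP.re_dotProduct_nonneg (Pi.single i 1)
  simpa [dotProduct, Matrix.mulVec, Pi.single_apply, Finset.mul_sum] using this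

lemma trace_mul_diagonal (N : Matrix n n ℂ) (dd : n → ℂ) :
    (N * Matrix.diagonal dd).trace = ∑ i, N i i * dd i := by
  simp [Matrix.trace, Matrix.diag, Matrix.mul_diagonal]

lemma trace_mul_spectral {Δ : Matrix n n ℂ} (hΔ : Δ.IsHermitian) (M : Matrix n n ℂ) :
    (M * Δ).trace = ∑ i, ((star (hΔ.eigenvectorUnitary : Matrix n n ℂ) * M *
      (hΔ.eigenvectorUnitary : Matrix n n ℂ)) i i) * (hΔ.eigenvalues i : ℂ) := by
  set U : Matrix n n ℂ := (hΔ.eigenvectorUnitary : Matrix n n ℂ) with hU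
  conv_lhs => rw [hΔ.spectral_theorem, Unitary.conjStarAlgAut_apply]
  rw [show M * (U * Matrix.diagonal (RCLike.ofReal ∘ hΔ.eigenvalues) * star U)
      = (M * U * Matrix.diagonal (RCLike.ofReal ∘ hΔ.eigenvalues)) * star U by
        rw [← Matrix.mul_assoc, ← Matrix.mul_assoc],
    Matrix.trace_mul_comm, ← Matrix.mul_assoc, ← Matrix.mul_assoc, trace_mul_diagonal]
  rfl

lemma trace_spectral {Δ : Matrix n n ℂ} (hΔ : Δ.IsHermitian) :
    Δ.trace = ∑ i, (hΔ.eigenvalues i : ℂ) := by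
  have h := trace_mul_spectral hΔ 1
  rw [one_mul] at h
  rw [h]
  have h2 : star (hΔ.eigenvectorUnitary : Matrix n n ℂ) * (hΔ.eigenvectorUnitary : Matrix n n ℂ)
      = 1 := Matrix.mem_unitaryGroup_iff'.mp hΔ.eigenvectorUnitary.2
  rw [Matrix.mul_one, h2]
  simp [Matrix.one_apply]

lemma traceNorm_eq_sum_abs {Δ : Matrix n n ℂ} (hΔ : Δ.IsHermitian) :
    traceNorm Δ = ∑ i, |hΔ.eigenvalues i| := by
  set U : Matrix n n ℂ := (hΔ.eigenvectorUnitary : Matrix n n ℂ) with hU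
  have h1 : U * star U = 1 := Matrix.mem_unitaryGroup_iff.mp hΔ.eigenvectorUnitary.2
  have h2 : star U * U = 1 := Matrix.mem_unitaryGroup_iff'.mp hΔ.eigenvectorUnitary.2
  set S : Matrix n n ℂ := U * Matrix.diagonal (fun i => ((|hΔ.eigenvalues i| : ℝ) : ℂ)) * star U
    with hS
  have hSpsd : S.PosSemidef := by
    apply Matrix.PosSemidef.mul_mul_conjTranspose_same ?_ U
    apply Matrix.PosSemidef.diagonal
    intro i
    exact Complex.zero_le_real.mpr (abs_nonneg _)
  have key2 : ∀ A B : Matrix n n ℂ,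
      (U * A * star U) * (U * B * star U) = U * (A * B) * star U := by
    intro A B
    calc (U * A * star U) * (U * B * star U)
        = U * (A * ((star U * U) * (B * star U))) := by simp only [Matrix.mul_assoc]
      _ = U * (A * (B * star U)) := by rw [h2, one_mul]
      _ = U * (A * B) * star U := by simp only [Matrix.mul_assoc]
  have hsq : Δᴴ * Δ = Δ ^ 2 := by rw [hΔ.eq, pow_two]
  have key : cfc Real.sqrt (Δᴴ * Δ) = cfc (fun x : ℝ => |x|) Δ := by
    rw [hsq, ← cfc_comp_pow Real.sqrt 2 Δ Real.continuous_sqrt.continuousOn hΔ.isSelfAdjoint]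
    refine cfc_congr fun x _ => ?_
    exact Real.sqrt_sq_eq_abs x
  have e1 : traceNorm Δ = (cfc Real.sqrt (Δᴴ * Δ)).trace.re := by
    rw [(Matrix.posSemidef_conjTranspose_mul_self Δ).1.cfc_eq, Matrix.IsHermitian.cfc,
      Unitary.conjStarAlgAut_apply]
    rfl
  rw [e1, key, hΔ.cfc_eq, Matrix.IsHermitian.cfc, Unitary.conjStarAlgAut_apply, ← hU,
    Matrix.trace_mul_comm, ← Matrix.mul_assoc, h2, one_mul, Matrix.trace_diagonal]
  simp

lemma sum_max_eq {m : Type*} [Fintype m] (f : m → ℝ) (h0 : ∑ i, f i = 0) :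
    ∑ i, max (f i) 0 = (1/2) * ∑ i, |f i| := by
  have h : ∀ i, max (f i) 0 = (|f i| + f i) / 2 := fun i => by
    rcases le_or_gt 0 (f i) with h | h
    · rw [max_eq_left h, abs_of_nonneg h]; ring
    · rw [max_eq_right h.le, abs_of_neg h]; ring
  simp_rw [h]
  have : ∑ x, (|f x| + f x) / 2 = (∑ x, |f x| + ∑ x, f x) / 2 := by
    rw [← Finset.sum_add_distrib, Finset.sum_div]
  rw [this, h0, add_zero]
  ring


/-- Holevo–Helstrom: the optimal average success probability of distinguishing two
density matrices equals 1/2 + (1/4)‖ρ₀ − ρ₁‖₁. -/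
theorem holevo_helstrom {d : ℕ} (ρ₀ ρ₁ : Matrix (Fin d) (Fin d) ℂ)
    (h₀ : ρ₀.PosSemidef) (h₁ : ρ₁.PosSemidef)
    (ht₀ : ρ₀.trace = 1) (ht₁ : ρ₁.trace = 1) :
    IsGreatest {p : ℝ | ∃ M₀ M₁ : Matrix (Fin d) (Fin d) ℂ,
        M₀.PosSemidef ∧ M₁.PosSemidef ∧ M₀ + M₁ = 1 ∧
        p = (1/2) * (((M₀ * ρ₀).trace).re + ((M₁ * ρ₁).trace).re)}
      (1/2 + (1/4) * traceNorm (ρ₀ - ρ₁)) := by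
  have hΔ : (ρ₀ - ρ₁).IsHermitian := h₀.1.sub h₁.1
  set Δ : Matrix (Fin d) (Fin d) ℂ := ρ₀ - ρ₁ with hΔdef
  set U : Matrix (Fin d) (Fin d) ℂ := (hΔ.eigenvectorUnitary : Matrix (Fin d) (Fin d) ℂ) with hU
  set lam : Fin d → ℝ := hΔ.eigenvalues with hlam
  have h1 : U * star U = 1 := Matrix.mem_unitaryGroup_iff.mp hΔ.eigenvectorUnitary.2
  have h2 : star U * U = 1 := Matrix.mem_unitaryGroup_iff'.mp hΔ.eigenvectorUnitary.2
  have htr0 : Δ.trace = 0 := by rw [hΔdef, Matrix.trace_sub, ht₀, ht₁, sub_self]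
  have hsum0 : ∑ i, lam i = 0 := by
    have h := trace_spectral hΔ
    rw [htr0] at h
    have : ((∑ i, lam i : ℝ) : ℂ) = 0 := by push_cast; rw [← h]
    exact_mod_cast this
  have htn : traceNorm Δ = ∑ i, |lam i| := traceNorm_eq_sum_abs hΔ
  have hred : ∀ M₀ : Matrix (Fin d) (Fin d) ℂ,
      ((M₀ * ρ₀).trace).re + (((1 - M₀) * ρ₁).trace).re = 1 + ((M₀ * Δ).trace).re := by
    intro M₀
    have e1 : (1 - M₀) * ρ₁ = ρ₁ - M₀ * ρ₁ := by rw [sub_mul, one_mul]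
    have e2 : M₀ * Δ = M₀ * ρ₀ - M₀ * ρ₁ := by rw [hΔdef, mul_sub]
    rw [e1, e2, Matrix.trace_sub, Matrix.trace_sub, ht₁]
    simp [Complex.sub_re]
    ring
  have hconj : ∀ A : Matrix (Fin d) (Fin d) ℂ, star U * (U * A * star U) * U = A := by
    intro A
    calc star U * (U * A * star U) * U = (star U * U) * A * (star U * U) := by
          simp only [Matrix.mul_assoc]
      _ = A := by rw [h2, one_mul, Matrix.mul_one]
  constructor
  · -- membership: the Helstrom measurement
    set e : Fin d → ℂ := fun i => if 0 ≤ lam i then 1 else 0 with he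
    set e' : Fin d → ℂ := fun i => if 0 ≤ lam i then 0 else 1 with he'
    have hde : Matrix.diagonal e + Matrix.diagonal e' = 1 := by
      have hee : (fun i => e i + e' i) = fun _ => (1 : ℂ) := by
        funext i
        by_cases h : 0 ≤ lam i <;> simp [he, he', h]
      rw [Matrix.diagonal_add, hee, Matrix.diagonal_one]
    have hsum : U * Matrix.diagonal e * star U + U * Matrix.diagonal e' * star U = 1 := by
      calc U * Matrix.diagonal e * star U + U * Matrix.diagonal e' * star U
          = U * (Matrix.diagonal e + Matrix.diagonal e') * star U := by
            rw [Matrix.mul_add, Matrix.add_mul]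
        _ = 1 := by rw [hde, Matrix.mul_one, h1]
    refine ⟨U * Matrix.diagonal e * star U, U * Matrix.diagonal e' * star U, ?_, ?_, hsum, ?_⟩
    · refine (Matrix.PosSemidef.diagonal ?_).mul_mul_conjTranspose_same U
      rw [Pi.le_def]
      intro i
      by_cases h : 0 ≤ lam i <;> simp [he, h]
    · refine (Matrix.PosSemidef.diagonal ?_).mul_mul_conjTranspose_same U
      rw [Pi.le_def]
      intro i
      by_cases h : 0 ≤ lam i <;> simp [he', h]
    · have hval : ((U * Matrix.diagonal e * star U * Δ).trace).re = (1/2) * traceNorm Δ := by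
        rw [trace_mul_spectral hΔ, hconj]
        have hterm : ∀ i, (Matrix.diagonal e i i * ((lam i : ℝ) : ℂ))
            = (((if 0 ≤ lam i then lam i else 0 : ℝ)) : ℂ) := by
          intro i
          by_cases h : 0 ≤ lam i <;> simp [Matrix.diagonal_apply_eq, he, h]
        rw [← hlam]
        simp_rw [hterm]
        rw [← Complex.ofReal_sum, Complex.ofReal_re, htn, ← sum_max_eq lam hsum0]
        congr 1
        funext i
        rcases le_or_gt 0 (lam i) with h | h
        · rw [if_pos h, max_eq_left h]
        · rw [if_neg (not_le.mpr h), max_eq_right h.le]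
      have heq : (1 : Matrix (Fin d) (Fin d) ℂ) - U * Matrix.diagonal e * star U
          = U * Matrix.diagonal e' * star U := by
        exact sub_eq_of_eq_add (by rw [← hsum, add_comm])
      have hfin := hred (U * Matrix.diagonal e * star U)
      rw [heq] at hfin
      rw [hfin, hval]
      ring
  · -- upper bound
    rintro p ⟨M₀, M₁, hM₀, hM₁, hMsum, hp⟩
    have hM₁eq : M₁ = 1 - M₀ := eq_sub_of_add_eq (by rw [add_comm]; exact hMsum)
    rw [hM₁eq] at hp
    rw [hp, hred M₀]
    set N : Matrix (Fin d) (Fin d) ℂ := star U * M₀ * U with hN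
    have hNpsd : N.PosSemidef := by
      have := hM₀.conjTranspose_mul_mul_same (B := U)
      rwa [← Matrix.star_eq_conjTranspose] at this
    have hNpsd' : (1 - N).PosSemidef := by
      have h1N : (1 : Matrix (Fin d) (Fin d) ℂ) - N = star U * (1 - M₀) * U := by
        rw [Matrix.mul_sub, Matrix.sub_mul, Matrix.mul_one, h2]
      rw [h1N, ← hM₁eq]
      have := hM₁.conjTranspose_mul_mul_same (B := U)
      rwa [← Matrix.star_eq_conjTranspose] at this
    have ht0 : ∀ i, 0 ≤ (N i i).re := diag_re_nonneg hNpsd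
    have ht1 : ∀ i, (N i i).re ≤ 1 := by
      intro i
      have hge := diag_re_nonneg hNpsd' i
      have h1ii : ((1 : Matrix (Fin d) (Fin d) ℂ) - N) i i = 1 - N i i := by
        simp [Matrix.sub_apply, Matrix.one_apply]
      rw [h1ii] at hge
      simp only [Complex.sub_re, Complex.one_re] at hge
      linarith
    have hre : ((M₀ * Δ).trace).re = ∑ i, (N i i).re * lam i := by
      rw [trace_mul_spectral hΔ, Complex.re_sum]
      congr 1
      funext i
      simp [Complex.mul_re]
      rfl
    have hbound : ((M₀ * Δ).trace).re ≤ (1/2) * traceNorm Δ := by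
      rw [hre, htn, ← sum_max_eq lam hsum0]
      apply Finset.sum_le_sum
      intro i _
      rcases le_or_gt 0 (lam i) with h | h
      · calc (N i i).re * lam i ≤ 1 * lam i := mul_le_mul_of_nonneg_right (ht1 i) h
          _ = lam i := one_mul _
          _ ≤ max (lam i) 0 := le_max_left _ _
      · calc (N i i).re * lam i ≤ 0 := mul_nonpos_of_nonneg_of_nonpos (ht0 i) h.le
          _ ≤ max (lam i) 0 := le_max_right _ _
    linarith
end
end

section
/- Let 𝓗 be a finite set of subgroups of a finite group G and suppose d := min_{H≠H'∈𝓗} |H|/|H∩H'| > 1. Then for k ≥ (log(16|𝓗|))/(log d), the pretty good measurement on k copies identifies any coset state ρ_H, H ∈ 𝓗, with error probability at most 1/4. -/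
noncomputable section

open scoped BigOperators ComplexOrder

set_option linter.unusedSectionVars false
set_option maxHeartbeats 1600000
open Matrix
namespace PGMAux

section TP
variable {n : Type*} [Fintype n] [DecidableEq n] (M N : Matrix n n ℂ) (k : ℕ)

lemma tensorPow_apply (x y : Fin k → n) : tensorPow M k x y = ∏ i, M (x i) (y i) := rfl

lemma tensorPow_mul : tensorPow M k * tensorPow N k = tensorPow (M * N) k := by
  ext x y
  show ∑ z : Fin k → n, (∏ i, M (x i) (z i)) * ∏ i, N (z i) (y i) = ∏ i, (M * N) (x i) (y i)
  simp_rw [← Finset.prod_mul_distrib, Matrix.mul_apply]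
  rw [Finset.prod_univ_sum]
  simp [Fintype.piFinset_univ]

lemma tensorPow_trace : (tensorPow M k).trace = M.trace ^ k := by
  show ∑ x : Fin k → n, ∏ i, M (x i) (x i) = (∑ g, M g g) ^ k
  rw [show (∑ g, M g g) ^ k = ∏ _i : Fin k, (∑ g, M g g) by simp, Finset.prod_univ_sum]
  simp

lemma tensorPow_conjTranspose : (tensorPow M k)ᴴ = tensorPow Mᴴ k := by
  ext x y
  show star (∏ i, M (y i) (x i)) = ∏ i, star (M (y i) (x i))
  exact star_prod _ _

lemma tensorPow_smul (c : ℂ) : tensorPow (c • M) k = c ^ k • tensorPow M k := by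
  ext x y
  show ∏ i, (c • M) (x i) (y i) = c ^ k * ∏ i, M (x i) (y i)
  simp [Matrix.smul_apply, Finset.prod_mul_distrib, Finset.card_univ]

end TP


section Single
variable {G : Type*} [Group G] [Fintype G] [DecidableEq G]

open Classical in
lemma card_filter_mem (x : G) (H : Subgroup G) :
    (Finset.univ.filter fun g => x⁻¹ * g ∈ H).card = Nat.card H := by
  rw [Nat.card_eq_fintype_card, Fintype.card_subtype]
  refine Finset.card_nbij' (fun g => x⁻¹ * g) (fun g => x * g) ?_ ?_ ?_ ?_ <;>
    intro a ha <;> simp_all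

open Classical in
def PM (H : Subgroup G) : Matrix G G ℂ :=
  Matrix.of fun x y => if x⁻¹ * y ∈ H then ((Nat.card H : ℂ))⁻¹ else 0

open Classical in
lemma PM_apply (H : Subgroup G) (x y : G) :
    PM H x y = if x⁻¹ * y ∈ H then ((Nat.card H : ℂ))⁻¹ else 0 := rfl

lemma natCard_ne_zero (H : Subgroup G) : (Nat.card ↥H : ℂ) ≠ 0 :=
  Nat.cast_ne_zero.mpr Nat.card_pos.ne'

lemma cardG_ne_zero : (Fintype.card G : ℂ) ≠ 0 :=
  Nat.cast_ne_zero.mpr Fintype.card_ne_zero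

lemma PM_eq (H : Subgroup G) :
    ((Fintype.card G : ℂ) / (Nat.card ↥H : ℂ)) • cosetState H = PM H := by
  have h1 := natCard_ne_zero H
  have h2 := cardG_ne_zero (G := G)
  ext x y
  simp only [Matrix.smul_apply, cosetState, PM, Matrix.of_apply, smul_eq_mul]
  split_ifs
  · field_simp
  · ring

lemma cosetState_eq (H : Subgroup G) :
    cosetState H = ((Nat.card ↥H : ℂ) / (Fintype.card G : ℂ)) • PM H := by
  rw [← PM_eq, smul_smul, div_mul_div_comm,
    mul_comm ((Nat.card ↥H : ℂ)) _, div_self (mul_ne_zero (cardG_ne_zero) (natCard_ne_zero H)),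
    one_smul]

open Classical in
lemma PM_mul_self (H : Subgroup G) : PM H * PM H = PM H := by
  ext x y
  rw [Matrix.mul_apply]
  simp only [PM_apply]
  by_cases hxy : x⁻¹ * y ∈ H
  · have hterm : ∀ g : G, (if x⁻¹ * g ∈ H then ((Nat.card ↥H : ℂ))⁻¹ else 0) *
        (if g⁻¹ * y ∈ H then ((Nat.card ↥H : ℂ))⁻¹ else 0) =
        (if x⁻¹ * g ∈ H then ((Nat.card ↥H : ℂ))⁻¹ * ((Nat.card ↥H : ℂ))⁻¹ else 0) := by
      intro g
      by_cases hg : x⁻¹ * g ∈ H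
      · have h2 : g⁻¹ * y ∈ H := by
          have := H.mul_mem (H.inv_mem hg) hxy
          simpa [_root_.mul_inv_rev, mul_assoc] using this
        simp [hg, h2]
      · simp [hg]
    rw [Finset.sum_congr rfl fun g _ => hterm g, ← Finset.sum_filter, Finset.sum_const,
      card_filter_mem, nsmul_eq_mul, if_pos hxy]
    have := natCard_ne_zero (G := G) H
    field_simp
  · rw [if_neg hxy]
    refine Finset.sum_eq_zero fun g _ => ?_
    by_cases hg : x⁻¹ * g ∈ H
    · have h2 : g⁻¹ * y ∉ H := fun h2 => hxy (by
        have := H.mul_mem hg h2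
        simpa [mul_assoc] using this)
      simp [h2]
    · simp [hg]

open Classical in
lemma PM_conjTranspose (H : Subgroup G) : (PM H)ᴴ = PM H := by
  ext x y
  simp only [Matrix.conjTranspose_apply, PM_apply]
  have hiff : y⁻¹ * x ∈ H ↔ x⁻¹ * y ∈ H := by
    constructor <;> intro h <;> simpa [_root_.mul_inv_rev] using H.inv_mem h
  split_ifs with h1 h2 h2 <;> simp_all

open Classical in
lemma trace_PM_mul_PM (H K : Subgroup G) :
    (PM H * PM K).trace =
      ((Fintype.card G : ℂ) * (Nat.card ↥(H ⊓ K) : ℂ)) /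
        ((Nat.card ↥H : ℂ) * (Nat.card ↥K : ℂ)) := by
  have hterm : ∀ x g : G, (if x⁻¹ * g ∈ H then ((Nat.card ↥H : ℂ))⁻¹ else 0) *
      (if g⁻¹ * x ∈ K then ((Nat.card ↥K : ℂ))⁻¹ else 0) =
      (if x⁻¹ * g ∈ H ⊓ K then ((Nat.card ↥H : ℂ))⁻¹ * ((Nat.card ↥K : ℂ))⁻¹ else 0) := by
    intro x g
    have hiff : g⁻¹ * x ∈ K ↔ x⁻¹ * g ∈ K := by
      constructor <;> intro h <;> simpa [_root_.mul_inv_rev] using K.inv_mem h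
    by_cases h1 : x⁻¹ * g ∈ H <;> by_cases h2 : x⁻¹ * g ∈ K <;>
      simp [h1, h2, hiff, Subgroup.mem_inf]
  have hinner : ∀ x : G, ∑ g : G, (if x⁻¹ * g ∈ H then ((Nat.card ↥H : ℂ))⁻¹ else 0) *
      (if g⁻¹ * x ∈ K then ((Nat.card ↥K : ℂ))⁻¹ else 0) =
      (Nat.card ↥(H ⊓ K) : ℂ) * (((Nat.card ↥H : ℂ))⁻¹ * ((Nat.card ↥K : ℂ))⁻¹) := by
    intro x
    rw [Finset.sum_congr rfl fun g _ => hterm x g, ← Finset.sum_filter, Finset.sum_const,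
      card_filter_mem, nsmul_eq_mul]
  rw [Matrix.trace]
  have : ∀ x : G, (PM H * PM K).diag x =
      (Nat.card ↥(H ⊓ K) : ℂ) * (((Nat.card ↥H : ℂ))⁻¹ * ((Nat.card ↥K : ℂ))⁻¹) := by
    intro x
    rw [Matrix.diag_apply, Matrix.mul_apply]
    simpa only [PM_apply] using hinner x
  rw [Finset.sum_congr rfl fun x _ => this x, Finset.sum_const, Finset.card_univ, nsmul_eq_mul]
  have h1 := natCard_ne_zero H
  have h2 := natCard_ne_zero K
  field_simp

lemma trace_PM (H : Subgroup G) : (PM H).trace = (Fintype.card G : ℂ) / (Nat.card ↥H : ℂ) := by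
  conv_lhs => rw [← PM_mul_self H, trace_PM_mul_PM]
  have : H ⊓ H = H := inf_idem H
  rw [this]
  have h1 := natCard_ne_zero H
  field_simp

end Single

section Core
variable {n : Type*} [Fintype n] [DecidableEq n]

lemma psd_diag_re_nonneg {M : Matrix n n ℂ} (h : M.PosSemidef) (i : n) : 0 ≤ (M i i).re := by
  have := h.re_dotProduct_nonneg (Pi.single i 1)
  simp only [Matrix.mulVec_single, mul_one] at this
  have hs : star (Pi.single i 1 : n → ℂ) = Pi.single i 1 := by
    funext j
    simp [Pi.single_apply, apply_ite (star : ℂ → ℂ)]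
  exact (Complex.le_def.mp (h.diag_nonneg (i := i))).1

lemma core {S Q : Matrix n n ℂ}
    (hS : S.IsHermitian) (hQh : star Q = Q) (hQi : Q * Q = Q) (hN : (S - Q).PosSemidef)
    {c E : ℝ} (hc : 0 < c) (hE : 0 ≤ E)
    (hQtr : Q.trace = ((c⁻¹ : ℝ) : ℂ))
    (hStr : (S * Q).trace = ((c⁻¹ + E : ℝ) : ℂ))
    (hcE : c * E ≤ 1 / 16) :
    ((c : ℂ) * (Q.trace - (pinvSqrt S * Q * pinvSqrt S * Q).trace)).re ≤ 1 / 4 := by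
  set U : Matrix n n ℂ := hS.eigenvectorUnitary.1 with hUdef
  have hU1 : star U * U = 1 := Matrix.mem_unitaryGroup_iff'.mp hS.eigenvectorUnitary.2
  have hU2 : U * star U = 1 := Matrix.mem_unitaryGroup_iff.mp hS.eigenvectorUnitary.2
  set lam : n → ℝ := hS.eigenvalues with hlamdef
  set μ : n → ℝ := fun i => (Real.sqrt (lam i))⁻¹ with hμdef
  have hμ0 : ∀ i, 0 ≤ μ i := fun i => inv_nonneg.mpr (Real.sqrt_nonneg _)
  set D : Matrix n n ℂ := Matrix.diagonal (fun i => ((lam i : ℝ) : ℂ)) with hDdef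
  set Dm : Matrix n n ℂ := Matrix.diagonal (fun i => ((μ i : ℝ) : ℂ)) with hDmdef
  set Qt : Matrix n n ℂ := star U * Q * U with hQtdef
  -- basic conjugation facts
  have hconjmul : ∀ A B : Matrix n n ℂ,
      (U * A * star U) * (U * B * star U) = U * (A * B) * star U := by
    intro A B
    calc (U * A * star U) * (U * B * star U) = U * A * (star U * U) * (B * star U) := by
          noncomm_ring
      _ = U * (A * B) * star U := by rw [hU1]; noncomm_ring
  have htrace_conj : ∀ A : Matrix n n ℂ, (U * A * star U).trace = A.trace := by
    intro A
    rw [Matrix.trace_mul_cycle, hU1, one_mul]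
  have hQ' : Q = U * Qt * star U := by
    rw [hQtdef]
    calc Q = (U * star U) * Q * (U * star U) := by rw [hU2]; noncomm_ring
      _ = U * (star U * Q * U) * star U := by noncomm_ring
  have hD' : star U * S * U = D := by
    simpa [Unitary.conjStarAlgAut_apply, Function.comp_def, hUdef, hDdef, hlamdef] using hS.conjStarAlgAut_star_eigenvectorUnitary
  have hS' : S = U * D * star U := by
    rw [← hD']
    calc S = (U * star U) * S * (U * star U) := by rw [hU2]; noncomm_ring
      _ = U * (star U * S * U) * star U := by noncomm_ring
  have hT : pinvSqrt S = U * Dm * star U := by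
    rw [pinvSqrt, dif_pos hS]
    congr 1
    congr 1
    funext i
    rw [hDmdef]
    push_cast [hμdef]
    rfl
  -- Qt is hermitian idempotent
  have hQth : star Qt = Qt := by
    rw [hQtdef]
    simp only [Matrix.star_mul, star_star, hQh, mul_assoc]
  have hQth' : ∀ i j, Qt j i = starRingEnd ℂ (Qt i j) := by
    intro i j
    have h1 := congrFun (congrFun hQth i) j
    rw [Matrix.star_apply] at h1
    rw [← h1, Complex.star_def, Complex.conj_conj]
  have hQti : Qt * Qt = Qt := by
    rw [hQtdef]
    calc (star U * Q * U) * (star U * Q * U) = star U * Q * (U * star U) * Q * U := by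
          noncomm_ring
      _ = star U * (Q * Q) * U := by rw [hU2]; noncomm_ring
      _ = star U * Q * U := by rw [hQi]
  -- diagonal data
  set qr : n → ℝ := fun i => ∑ j, Complex.normSq (Qt i j) with hqrdef
  have hqr0 : ∀ i, 0 ≤ qr i := fun i => Finset.sum_nonneg fun j _ => Complex.normSq_nonneg _
  have hQtdiag : ∀ i, Qt i i = ((qr i : ℝ) : ℂ) := by
    intro i
    conv_lhs => rw [← hQti]
    rw [Matrix.mul_apply]
    push_cast [hqrdef]
    refine Finset.sum_congr rfl fun j _ => ?_
    have h1 := Complex.mul_conj (Qt i j)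
    rw [← hQth' i j] at h1
    exact h1
  -- trace computations
  have htrQt : Q.trace = ((∑ i, qr i : ℝ) : ℂ) := by
    rw [hQ', htrace_conj, Matrix.trace]
    push_cast
    exact Finset.sum_congr rfl fun i _ => by rw [Matrix.diag_apply, hQtdiag]
  have htrSQ : (S * Q).trace = ((∑ i, lam i * qr i : ℝ) : ℂ) := by
    rw [hS', hQ', hconjmul, htrace_conj, Matrix.trace]
    push_cast
    refine Finset.sum_congr rfl fun i _ => ?_
    rw [Matrix.diag_apply, hDdef, Matrix.diagonal_mul, hQtdiag]
  set T2 : ℝ := ∑ i, ∑ j, μ i * μ j * Complex.normSq (Qt i j) with hT2def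
  have htrDm : (Dm * Qt * Dm * Qt).trace = ((T2 : ℝ) : ℂ) := by
    have hassoc : Dm * Qt * Dm * Qt = (Dm * Qt) * (Dm * Qt) := by noncomm_ring
    rw [hassoc, Matrix.trace]
    push_cast [hT2def]
    refine Finset.sum_congr rfl fun i _ => ?_
    rw [Matrix.diag_apply, Matrix.mul_apply]
    push_cast
    refine Finset.sum_congr rfl fun j _ => ?_
    rw [hDmdef, Matrix.diagonal_mul, Matrix.diagonal_mul]
    have h1 := Complex.mul_conj (Qt i j)
    rw [← hQth' i j] at h1
    calc ((μ i : ℝ) : ℂ) * Qt i j * (((μ j : ℝ) : ℂ) * Qt j i)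
        = ((μ i : ℝ) : ℂ) * ((μ j : ℝ) : ℂ) * (Qt i j * Qt j i) := by ring
      _ = ((μ i : ℝ) : ℂ) * ((μ j : ℝ) : ℂ) * ((Complex.normSq (Qt i j) : ℝ) : ℂ) := by
          rw [h1]
  have htrTQTQ : (pinvSqrt S * Q * pinvSqrt S * Q).trace = ((T2 : ℝ) : ℂ) := by
    have : pinvSqrt S * Q * pinvSqrt S * Q = U * (Dm * Qt * Dm * Qt) * star U := by
      rw [hT, hQ', hconjmul, hconjmul, hconjmul]
    rw [this, htrace_conj, htrDm]
  -- qr i ≤ lam i via positive semidefiniteness of S - Q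
  have hNt : (D - Qt).PosSemidef := by
    have h1 : D - Qt = star U * (S - Q) * U := by
      rw [Matrix.mul_sub, Matrix.sub_mul, hD', hQtdef]
    rw [h1, Matrix.star_eq_conjTranspose]
    exact hN.conjTranspose_mul_mul_same U
  have hqrlam : ∀ i, qr i ≤ lam i := by
    intro i
    have h0 := psd_diag_re_nonneg hNt i
    have h1 : (D - Qt) i i = ((lam i : ℝ) : ℂ) - ((qr i : ℝ) : ℂ) := by
      rw [Matrix.sub_apply, hQtdiag, hDdef, Matrix.diagonal_apply_eq]
    rw [h1] at h0
    simp only [Complex.sub_re, Complex.ofReal_re] at h0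
    linarith
  have hlam0 : ∀ i, 0 ≤ lam i := fun i => le_trans (hqr0 i) (hqrlam i)
  -- real quantities
  set Qtot : ℝ := ∑ i, qr i with hQtotdef
  set L : ℝ := ∑ i, lam i * qr i with hLdef
  set A : ℝ := ∑ i, qr i * μ i with hAdef
  set B : ℝ := ∑ i, qr i * Real.sqrt (lam i) with hBdef
  have hQtotc : Qtot = c⁻¹ := by
    have h1 : ((Qtot : ℝ) : ℂ) = ((c⁻¹ : ℝ) : ℂ) := htrQt.symm.trans hQtr
    exact_mod_cast h1
  have hLc : L = c⁻¹ + E := by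
    have h1 : ((L : ℝ) : ℂ) = ((c⁻¹ + E : ℝ) : ℂ) := htrSQ.symm.trans hStr
    exact_mod_cast h1
  have hA0 : 0 ≤ A := Finset.sum_nonneg fun i _ => mul_nonneg (hqr0 i) (hμ0 i)
  have hB0 : 0 ≤ B := Finset.sum_nonneg fun i _ =>
    mul_nonneg (hqr0 i) (Real.sqrt_nonneg _)
  have hT20 : 0 ≤ T2 := Finset.sum_nonneg fun i _ => Finset.sum_nonneg fun j _ =>
    mul_nonneg (mul_nonneg (hμ0 i) (hμ0 j)) (Complex.normSq_nonneg _)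
  have hQtotpos : 0 < Qtot := by
    rw [hQtotc]; exact inv_pos.mpr hc
  -- Cauchy-Schwarz (a): Qtot² ≤ B * A
  have csa : Qtot ^ 2 ≤ B * A := by
    refine Finset.sum_sq_le_sum_mul_sum_of_sq_eq_mul Finset.univ
      (r := fun i => qr i) (f := fun i => qr i * Real.sqrt (lam i))
      (g := fun i => qr i * μ i) ?_ ?_ ?_
    · exact fun i _ => mul_nonneg (hqr0 i) (Real.sqrt_nonneg _)
    · exact fun i _ => mul_nonneg (hqr0 i) (hμ0 i)
    · intro i _
      show qr i ^ 2 = qr i * Real.sqrt (lam i) * (qr i * μ i)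
      rcases eq_or_lt_of_le (hqr0 i) with h0 | h0
      · rw [← h0]; ring
      · have hlampos : 0 < lam i := lt_of_lt_of_le h0 (hqrlam i)
        have hs : Real.sqrt (lam i) * μ i = 1 := by
          rw [hμdef]
          exact mul_inv_cancel₀ (ne_of_gt (Real.sqrt_pos.mpr hlampos))
        calc qr i ^ 2 = qr i * qr i * (Real.sqrt (lam i) * μ i) := by rw [hs]; ring
          _ = qr i * Real.sqrt (lam i) * (qr i * μ i) := by ring
  -- Cauchy-Schwarz (b): B² ≤ Qtot * L
  have csb : B ^ 2 ≤ Qtot * L := by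
    have h1 := Finset.sum_mul_sq_le_sq_mul_sq Finset.univ
      (fun i => Real.sqrt (qr i)) (fun i => Real.sqrt (qr i) * Real.sqrt (lam i))
    have h2 : ∀ i : n, Real.sqrt (qr i) * (Real.sqrt (qr i) * Real.sqrt (lam i)) =
        qr i * Real.sqrt (lam i) := by
      intro i
      rw [← mul_assoc, Real.mul_self_sqrt (hqr0 i)]
    have h3 : ∀ i : n, Real.sqrt (qr i) ^ 2 = qr i := fun i => Real.sq_sqrt (hqr0 i)
    have h4 : ∀ i : n, (Real.sqrt (qr i) * Real.sqrt (lam i)) ^ 2 = lam i * qr i := by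
      intro i
      rw [mul_pow, Real.sq_sqrt (hqr0 i), Real.sq_sqrt (hlam0 i)]
      ring
    rw [Finset.sum_congr rfl fun i _ => h2 i, Finset.sum_congr rfl fun i _ => h3 i,
      Finset.sum_congr rfl fun i _ => h4 i] at h1
    exact h1
  -- Matrix Cauchy-Schwarz: A² ≤ Qtot * T2
  set R : Matrix n n ℂ := Qt * Dm * Qt with hRdef
  have hDmh : star Dm = Dm := by
    have hfun : (star fun i => ((μ i : ℝ) : ℂ)) = fun i => ((μ i : ℝ) : ℂ) := by
      funext i
      rw [Pi.star_apply, Complex.star_def, Complex.conj_ofReal]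
    rw [hDmdef, Matrix.star_eq_conjTranspose, Matrix.diagonal_conjTranspose, hfun]
  have hRh : star R = R := by
    rw [hRdef]
    simp only [Matrix.star_mul, hQth, hDmh, mul_assoc]
  have hRij : ∀ i j, R j i = starRingEnd ℂ (R i j) := by
    intro i j
    have h1 := congrFun (congrFun hRh i) j
    rw [Matrix.star_apply] at h1
    rw [← h1, Complex.star_def, Complex.conj_conj]
  have htrQtR : (Qt * R).trace = ((A : ℝ) : ℂ) := by
    have h1 : Qt * R = Qt * Dm * Qt := by
      rw [hRdef]
      calc Qt * (Qt * Dm * Qt) = (Qt * Qt) * Dm * Qt := by noncomm_ring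
        _ = Qt * Dm * Qt := by rw [hQti]
    rw [h1, Matrix.trace_mul_cycle, hQti, Matrix.trace_mul_comm, Matrix.trace]
    push_cast [hAdef]
    refine Finset.sum_congr rfl fun i _ => ?_
    rw [Matrix.diag_apply, hDmdef, Matrix.diagonal_mul, hQtdiag]
    push_cast
    ring
  have htrRR : (R * R).trace = ((T2 : ℝ) : ℂ) := by
    have h1 : R * R = Qt * (Dm * Qt * Dm * Qt) := by
      rw [hRdef]
      calc (Qt * Dm * Qt) * (Qt * Dm * Qt) = Qt * Dm * (Qt * Qt) * Dm * Qt := by noncomm_ring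
        _ = Qt * Dm * Qt * Dm * Qt := by rw [hQti]
        _ = Qt * (Dm * Qt * Dm * Qt) := by noncomm_ring
    rw [h1, Matrix.trace_mul_comm]
    have h2 : Dm * Qt * Dm * Qt * Qt = Dm * Qt * Dm * Qt := by
      calc Dm * Qt * Dm * Qt * Qt = Dm * Qt * Dm * (Qt * Qt) := by noncomm_ring
        _ = Dm * Qt * Dm * Qt := by rw [hQti]
    rw [h2, htrDm]
  have hsumR : ∑ i, ∑ j, Complex.normSq (R i j) = T2 := by
    have h1 : (R * R).trace = ((∑ i, ∑ j, Complex.normSq (R i j) : ℝ) : ℂ) := by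
      rw [Matrix.trace]
      push_cast
      refine Finset.sum_congr rfl fun i _ => ?_
      rw [Matrix.diag_apply, Matrix.mul_apply]
      push_cast
      refine Finset.sum_congr rfl fun j _ => ?_
      have hmc := Complex.mul_conj (R i j)
      rw [← hRij i j] at hmc
      exact hmc
    have h2 : ((∑ i, ∑ j, Complex.normSq (R i j) : ℝ) : ℂ) = ((T2 : ℝ) : ℂ) :=
      h1.symm.trans htrRR
    exact_mod_cast h2
  have habs : A ≤ ∑ i, ∑ j, ‖Qt i j‖ * ‖R j i‖ := by
    have h1 : A = ((Qt * R).trace).re := by rw [htrQtR, Complex.ofReal_re]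
    have h2 : (Qt * R).trace = ∑ i, ∑ j, Qt i j * R j i := by
      rw [Matrix.trace]
      exact Finset.sum_congr rfl fun i _ => by rw [Matrix.diag_apply, Matrix.mul_apply]
    rw [h1, h2]
    rw [Complex.re_sum]
    refine Finset.sum_le_sum fun i _ => ?_
    rw [Complex.re_sum]
    refine Finset.sum_le_sum fun j _ => ?_
    calc (Qt i j * R j i).re ≤ ‖Qt i j * R j i‖ := Complex.re_le_norm _
      _ = ‖Qt i j‖ * ‖R j i‖ := norm_mul _ _
  have csA : A ^ 2 ≤ Qtot * T2 := by
    have h1 := Finset.sum_mul_sq_le_sq_mul_sq (Finset.univ : Finset (n × n))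
      (fun p => ‖Qt p.1 p.2‖) (fun p => ‖R p.2 p.1‖)
    have e1 : ∑ p : n × n, ‖Qt p.1 p.2‖ * ‖R p.2 p.1‖ =
        ∑ i, ∑ j, ‖Qt i j‖ * ‖R j i‖ := Fintype.sum_prod_type _
    have e2 : ∑ p : n × n, ‖Qt p.1 p.2‖ ^ 2 = Qtot := by
      rw [Fintype.sum_prod_type]
      simp only [Complex.sq_norm]
      rfl
    have e3 : ∑ p : n × n, ‖R p.2 p.1‖ ^ 2 = T2 := by
      rw [Fintype.sum_prod_type]
      rw [Finset.sum_comm]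
      simp only [Complex.sq_norm]
      exact hsumR
    rw [e1, e2, e3] at h1
    have h2 : A ^ 2 ≤ (∑ i, ∑ j, ‖Qt i j‖ * ‖R j i‖) ^ 2 :=
      pow_le_pow_left₀ hA0 habs 2
    exact h2.trans h1
  -- final arithmetic
  have hgoal : ((c : ℂ) * (Q.trace - (pinvSqrt S * Q * pinvSqrt S * Q).trace)).re =
      c * (Qtot - T2) := by
    rw [htrQt, htrTQTQ]
    have h1 : (c : ℂ) * (((Qtot : ℝ) : ℂ) - ((T2 : ℝ) : ℂ)) = ((c * (Qtot - T2) : ℝ) : ℂ) := by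
      push_cast
      ring
    rw [h1, Complex.ofReal_re]
  rw [hgoal]
  have hc' : c * c⁻¹ = 1 := mul_inv_cancel₀ (ne_of_gt hc)
  have hL0 : 0 < L := by
    rw [hLc]
    have := inv_pos.mpr hc
    linarith
  have step1 : Qtot ^ 2 * Qtot ^ 2 ≤ (Qtot * L) * (Qtot * T2) := by
    have e1 : Qtot ^ 2 * Qtot ^ 2 ≤ (B * A) * (B * A) := by nlinarith [csa, sq_nonneg Qtot]
    have e3 : B ^ 2 * A ^ 2 ≤ (Qtot * L) * (Qtot * T2) :=
      mul_le_mul csb csA (sq_nonneg A) (mul_nonneg hQtotpos.le hL0.le)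
    nlinarith [e1, e3]
  have step2 : Qtot ^ 2 ≤ L * T2 := by
    have h' : Qtot ^ 2 * Qtot ^ 2 ≤ Qtot ^ 2 * (L * T2) := by nlinarith [step1]
    exact le_of_mul_le_mul_left h' (pow_pos hQtotpos 2)
  have step3 : 1 ≤ (c * L) * (c * T2) := by
    have h' := mul_le_mul_of_nonneg_left step2 (by positivity : (0:ℝ) ≤ c ^ 2)
    calc (1 : ℝ) = (c * Qtot) ^ 2 := by rw [hQtotc, hc']; norm_num
      _ = c ^ 2 * Qtot ^ 2 := by ring
      _ ≤ c ^ 2 * (L * T2) := h'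
      _ = (c * L) * (c * T2) := by ring
  have step4 : c * L ≤ 17 / 16 := by
    rw [hLc, mul_add, hc']
    linarith
  have hcT20 : 0 ≤ c * T2 := mul_nonneg hc.le hT20
  have step5 : 16 / 17 ≤ c * T2 := by
    have h' : (c * L) * (c * T2) ≤ (17 / 16) * (c * T2) :=
      mul_le_mul_of_nonneg_right step4 hcT20
    linarith
  have hfin : c * (Qtot - T2) = 1 - c * T2 := by
    rw [mul_sub, hQtotc, hc']
  rw [hfin]
  linarith


end Core
end PGMAux

open Classical in
/-- If d := min over distinct H, H' ∈ 𝓗 of |H|/|H∩H'| exceeds 1, then for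
k ≥ log(16|𝓗|)/log d the pretty good measurement identifies any coset state with
error probability at most 1/4. -/
theorem pgm_identifies_with_error_le_quarter {G : Type*} [Group G] [Fintype G] [DecidableEq G]
    (𝓗 : Finset (Subgroup G)) (h2 : 𝓗.offDiag.Nonempty) (k : ℕ) (d : ℝ)
    (hd : d = 𝓗.offDiag.inf' h2 fun q => (Nat.card ↥q.1 : ℝ) / (Nat.card ↥(q.1 ⊓ q.2) : ℝ))
    (hd1 : 1 < d)
    (hk : Real.log (16 * (𝓗.card : ℝ)) / Real.log d ≤ (k : ℝ)) :
    ∀ H ∈ 𝓗,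
      ((((1 : Matrix (Fin k → G) (Fin k → G) ℂ) -
          pinvSqrt (∑ K ∈ 𝓗,
              tensorPow (((Fintype.card G : ℂ) / (Nat.card ↥K : ℂ)) • cosetState K) k) *
            tensorPow (((Fintype.card G : ℂ) / (Nat.card ↥H : ℂ)) • cosetState H) k *
            pinvSqrt (∑ K ∈ 𝓗,
              tensorPow (((Fintype.card G : ℂ) / (Nat.card ↥K : ℂ)) • cosetState K) k)) *
        tensorPow (cosetState H) k).trace).re ≤ 1/4 := by
  intro H hH
  classical
  simp only [PGMAux.PM_eq]
  set Qm : Subgroup G → Matrix (Fin k → G) (Fin k → G) ℂ :=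
    fun K => tensorPow (PGMAux.PM K) k with hQmdef
  set S : Matrix (Fin k → G) (Fin k → G) ℂ := ∑ K ∈ 𝓗, Qm K with hSdef
  set Q : Matrix (Fin k → G) (Fin k → G) ℂ := Qm H with hQdef
  -- basic facts about the blocks
  have hQmherm : ∀ K : Subgroup G, (Qm K)ᴴ = Qm K := by
    intro K
    rw [hQmdef]
    rw [PGMAux.tensorPow_conjTranspose, PGMAux.PM_conjTranspose]
  have hQmidem : ∀ K : Subgroup G, Qm K * Qm K = Qm K := by
    intro K
    rw [hQmdef]
    rw [PGMAux.tensorPow_mul, PGMAux.PM_mul_self]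
  have hQmpsd : ∀ K : Subgroup G, (Qm K).PosSemidef := by
    intro K
    have h1 := Matrix.posSemidef_conjTranspose_mul_self (Qm K)
    rwa [hQmherm K, hQmidem K] at h1
  have hS : S.IsHermitian := by
    show Sᴴ = S
    rw [hSdef, Matrix.conjTranspose_sum]
    exact Finset.sum_congr rfl fun K _ => hQmherm K
  have hQh : star Q = Q := by
    rw [Matrix.star_eq_conjTranspose]
    exact hQmherm H
  have hQi : Q * Q = Q := hQmidem H
  have hN : (S - Q).PosSemidef := by
    have h1 : S - Q = ∑ K ∈ 𝓗.erase H, Qm K := by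
      rw [hSdef, ← Finset.add_sum_erase 𝓗 Qm hH]
      abel
    rw [h1]
    refine Finset.sum_induction Qm (fun M => M.PosSemidef)
      (fun a b ha hb => ha.add hb) Matrix.PosSemidef.zero ?_
    exact fun K _ => hQmpsd K
  -- numerical setup
  have hGpos : (0:ℝ) < (Fintype.card G : ℝ) := by
    exact_mod_cast Fintype.card_pos
  have hHpos : ∀ K : Subgroup G, (0:ℝ) < (Nat.card ↥K : ℝ) := by
    intro K
    exact_mod_cast Nat.card_pos
  set c : ℝ := ((Nat.card ↥H : ℝ) / (Fintype.card G : ℝ)) ^ k with hcdef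
  have hc : 0 < c := pow_pos (div_pos (hHpos H) hGpos) k
  have hcinv : c⁻¹ = ((Fintype.card G : ℝ) / (Nat.card ↥H : ℝ)) ^ k := by
    rw [hcdef, ← inv_pow, inv_div]
  set eK : Subgroup G → ℝ := fun K =>
    ((Fintype.card G : ℝ) * (Nat.card ↥(K ⊓ H) : ℝ) /
      ((Nat.card ↥K : ℝ) * (Nat.card ↥H : ℝ))) ^ k with heKdef
  set E : ℝ := ∑ K ∈ 𝓗.erase H, eK K with hEdef
  have heK0 : ∀ K : Subgroup G, 0 ≤ eK K := by
    intro K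
    rw [heKdef]
    positivity
  have hE : 0 ≤ E := Finset.sum_nonneg fun K _ => heK0 K
  -- trace identities
  have htrQ : Q.trace = ((c⁻¹ : ℝ) : ℂ) := by
    rw [hQdef, hQmdef, PGMAux.tensorPow_trace, PGMAux.trace_PM, hcinv]
    push_cast
    ring
  have htrKH : ∀ K : Subgroup G, (Qm K * Q).trace = ((eK K : ℝ) : ℂ) := by
    intro K
    rw [hQdef, hQmdef, PGMAux.tensorPow_mul, PGMAux.tensorPow_trace,
      PGMAux.trace_PM_mul_PM, heKdef]
    push_cast
    ring
  have htrSQ : (S * Q).trace = ((c⁻¹ + E : ℝ) : ℂ) := by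
    rw [hSdef, Finset.sum_mul, Matrix.trace_sum,
      ← Finset.add_sum_erase 𝓗 (fun K => (Qm K * Q).trace) hH]
    have h1 : (Qm H * Q).trace = ((c⁻¹ : ℝ) : ℂ) := by
      rw [← hQdef, hQi, htrQ]
    rw [h1, Finset.sum_congr rfl fun K _ => htrKH K, hEdef]
    push_cast
    ring
  -- the error-sum bound
  have hd0 : (0:ℝ) < d := lt_trans one_pos hd1
  have hcard1 : 1 ≤ (𝓗.card : ℝ) := by
    obtain ⟨q, hq⟩ := h2
    have hq1 : q.1 ∈ 𝓗 := (Finset.mem_offDiag.mp hq).1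
    have : 0 < 𝓗.card := Finset.card_pos.mpr ⟨q.1, hq1⟩
    exact_mod_cast this
  have hdk : (16 * (𝓗.card : ℝ)) ≤ d ^ k := by
    have hlogd : 0 < Real.log d := Real.log_pos hd1
    have h16 : (0:ℝ) < 16 * (𝓗.card : ℝ) := by linarith
    have h1 : Real.log (16 * (𝓗.card : ℝ)) ≤ (k : ℝ) * Real.log d := by
      rw [div_le_iff₀ hlogd] at hk
      exact hk
    have h2 : Real.log (16 * (𝓗.card : ℝ)) ≤ Real.log (d ^ k) := by
      rw [Real.log_pow]
      exact h1
    exact (Real.log_le_log_iff h16 (pow_pos hd0 k)).mp h2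
  have hcE : c * E ≤ 1 / 16 := by
    have hterm : ∀ K ∈ 𝓗.erase H, c * eK K ≤ (1 / d) ^ k := by
      intro K hK
      have hKH : K ≠ H := Finset.ne_of_mem_erase hK
      have hK𝓗 : K ∈ 𝓗 := Finset.mem_of_mem_erase hK
      have hmem : (K, H) ∈ 𝓗.offDiag := Finset.mem_offDiag.mpr ⟨hK𝓗, hH, hKH⟩
      have hdle : d ≤ (Nat.card ↥K : ℝ) / (Nat.card ↥(K ⊓ H) : ℝ) := by
        rw [hd]
        exact Finset.inf'_le _ hmem
      have hIpos : (0:ℝ) < (Nat.card ↥(K ⊓ H) : ℝ) := hHpos (K ⊓ H)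
      have hKpos : (0:ℝ) < (Nat.card ↥K : ℝ) := hHpos K
      have hratio : (Nat.card ↥(K ⊓ H) : ℝ) / (Nat.card ↥K : ℝ) ≤ 1 / d := by
        rw [div_le_div_iff₀ hKpos hd0]
        have h' : d * (Nat.card ↥(K ⊓ H) : ℝ) ≤ (Nat.card ↥K : ℝ) :=
          (le_div_iff₀ hIpos).mp hdle
        nlinarith [h']
      have hceK : c * eK K =
          ((Nat.card ↥(K ⊓ H) : ℝ) / (Nat.card ↥K : ℝ)) ^ k := by
        rw [hcdef, heKdef, ← mul_pow]
        congr 1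
        field_simp
      rw [hceK]
      refine pow_le_pow_left₀ ?_ hratio k
      positivity
    have h1 : c * E = ∑ K ∈ 𝓗.erase H, c * eK K := by
      rw [hEdef, Finset.mul_sum]
    have h2 : ∑ K ∈ 𝓗.erase H, c * eK K ≤ (𝓗.erase H).card • ((1 / d) ^ k) :=
      Finset.sum_le_card_nsmul _ _ _ hterm
    have h3 : ((𝓗.erase H).card : ℝ) * ((1 / d) ^ k) ≤ (𝓗.card : ℝ) * ((1 / d) ^ k) := by
      have : ((𝓗.erase H).card : ℝ) ≤ (𝓗.card : ℝ) := by
        exact_mod_cast Finset.card_erase_le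
      have hp : (0:ℝ) ≤ (1 / d) ^ k := by positivity
      exact mul_le_mul_of_nonneg_right this hp
    have h4 : (𝓗.card : ℝ) * ((1 / d) ^ k) ≤ 1 / 16 := by
      have hdkpos : (0:ℝ) < d ^ k := pow_pos hd0 k
      rw [div_pow, one_pow, mul_one_div, div_le_div_iff₀ hdkpos (by norm_num : (0:ℝ) < 16)]
      linarith [hdk]
    rw [h1]
    calc ∑ K ∈ 𝓗.erase H, c * eK K ≤ (𝓗.erase H).card • ((1 / d) ^ k) := h2
      _ = ((𝓗.erase H).card : ℝ) * ((1 / d) ^ k) := by rw [nsmul_eq_mul]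
      _ ≤ (𝓗.card : ℝ) * ((1 / d) ^ k) := h3
      _ ≤ 1 / 16 := h4
  -- rewrite the goal into the core form
  have hrho : tensorPow (cosetState H) k = ((c : ℝ) : ℂ) • Q := by
    rw [PGMAux.cosetState_eq, PGMAux.tensorPow_smul, hQdef, hQmdef, hcdef]
    push_cast
    ring_nf
  rw [hrho]
  have hexpand : ((1 : Matrix (Fin k → G) (Fin k → G) ℂ) -
      pinvSqrt S * Q * pinvSqrt S) * (((c : ℝ) : ℂ) • Q) =
      ((c : ℝ) : ℂ) • (Q - pinvSqrt S * Q * pinvSqrt S * Q) := by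
    rw [Matrix.mul_smul, Matrix.sub_mul, one_mul]
  rw [hexpand, Matrix.trace_smul]
  have hfinal := PGMAux.core hS hQh hQi hN hc hE htrQ htrSQ hcE
  have : (((c : ℝ) : ℂ) • (Q - pinvSqrt S * Q * pinvSqrt S * Q).trace) =
      ((c : ℝ) : ℂ) * (Q.trace - (pinvSqrt S * Q * pinvSqrt S * Q).trace) := by
    rw [smul_eq_mul, Matrix.trace_sub]
  rw [this]
  exact hfinal
end
end
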